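/- For all integers n, k with 2 ≤ k ≤ 2n − 3, there exists a connected simple graph G on n vertices with sum index s(G) = k. -/

import Mathlib

open SimpleGraph Function

def edgePlus {V : Type*} (f : V → ℤ) : Sym2 V → ℤ :=
  Sym2.lift ⟨fun u v => f u + f v, fun u v => by ring⟩

def edgeMinus {V : Type*} (f : V → ℤ) : Sym2 V → ℤ :=
  Sym2.lift ⟨fun u v => |f u - f v|, fun u v => abs_sub_comm _ _⟩

/-- The sum index: the minimum, over injective vertex labelings `f : V → ℤ`,
of the number of distinct values of `f⁺(uv) = f u + f v` on the edges. -/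
noncomputable def sumIndex {V : Type*} (G : SimpleGraph V) : ℕ :=
  sInf {k | ∃ f : V → ℤ, Function.Injective f ∧ (edgePlus f '' G.edgeSet).ncard = k}

/-- The difference index: the minimum, over injective vertex labelings `f : V → ℤ`,
of the number of distinct values of `f⁻(uv) = |f u − f v|` on the edges. -/
noncomputable def diffIndex {V : Type*} (G : SimpleGraph V) : ℕ :=
  sInf {k | ∃ f : V → ℤ, Function.Injective f ∧ (edgeMinus f '' G.edgeSet).ncard = k}


lemma edgePlus_mk {V : Type*} (f : V → ℤ) (u v : V) : edgePlus f s(u,v) = f u + f v := rfl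

lemma sumIndex_eq_of {V : Type*} (G : SimpleGraph V) (k : ℕ)
    (f : V → ℤ) (hf : Injective f) (hcard : (edgePlus f '' G.edgeSet).ncard = k)
    (hlb : ∀ g : V → ℤ, Injective g → k ≤ (edgePlus g '' G.edgeSet).ncard) :
    sumIndex G = k := by
  refine le_antisymm (Nat.sInf_le ⟨f, hf, hcard⟩) ?_
  refine le_csInf ⟨k, f, hf, hcard⟩ ?_
  rintro m ⟨g, hg, rfl⟩
  exact hlb g hg

lemma lb_aux {V : Type*} [Finite V] (G : SimpleGraph V) (f : V → ℤ) {α : Type*} (I : Finset α)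
    (c : α → ℤ) (hinj : Set.InjOn c I) (hmem : ∀ i ∈ I, c i ∈ edgePlus f '' G.edgeSet) :
    I.card ≤ (edgePlus f '' G.edgeSet).ncard := by
  classical
  have h1 : (I.image c).card = I.card := Finset.card_image_of_injOn hinj
  have hfin : (edgePlus f '' G.edgeSet).Finite := (Set.toFinite _).image _
  rw [← h1, ← Set.ncard_coe_finset]
  refine Set.ncard_le_ncard ?_ hfin
  intro x hx
  simp only [Finset.coe_image, Set.mem_image, Finset.mem_coe] at hx
  obtain ⟨i, hi, rfl⟩ := hx
  exact hmem i hi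

def pathLabel (c : ℤ) (j : ℕ) : ℤ := if j % 2 = 0 then c + (j / 2 : ℕ) else -(((j+1)/2 : ℕ))

lemma pathLabel_sum (c : ℤ) (j : ℕ) :
    pathLabel c j + pathLabel c (j+1) = if j % 2 = 0 then c - 1 else c := by
  unfold pathLabel; split_ifs <;> push_cast <;> omega

def broom (n k : ℕ) : SimpleGraph (Fin n) where
  Adj i j := (i.val = 0 ∧ 1 ≤ j.val ∧ j.val ≤ k) ∨ (j.val = 0 ∧ 1 ≤ i.val ∧ i.val ≤ k)
    ∨ (k ≤ i.val ∧ j.val = i.val + 1) ∨ (k ≤ j.val ∧ i.val = j.val + 1)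
  symm := by constructor; intro i j h; tauto
  loopless := by constructor; intro i h; rcases h with h|h|h|h <;> omega

lemma broom_adj {n k : ℕ} {i j : Fin n} : (broom n k).Adj i j ↔
    (i.val = 0 ∧ 1 ≤ j.val ∧ j.val ≤ k) ∨ (j.val = 0 ∧ 1 ≤ i.val ∧ i.val ≤ k)
    ∨ (k ≤ i.val ∧ j.val = i.val + 1) ∨ (k ≤ j.val ∧ i.val = j.val + 1) := Iff.rfl

lemma broom_connected (n k : ℕ) (hk : 1 ≤ k) (hn : k + 1 ≤ n) : (broom n k).Connected := by
  have hn0 : 0 < n := by omega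
  rw [connected_iff]
  have key : ∀ t, ∀ i : Fin n, i.val = t → (broom n k).Reachable i ⟨0, hn0⟩ := by
    intro t
    induction t using Nat.strong_induction_on with
    | _ t ih =>
      intro i hi
      rcases Nat.eq_zero_or_pos t with h0 | hpos
      · have : i = ⟨0, hn0⟩ := by apply Fin.ext; simp; omega
        rw [this]
      · by_cases hle : t ≤ k
        · refine SimpleGraph.Adj.reachable ?_
          rw [broom_adj]
          right; left
          refine ⟨rfl, ?_, ?_⟩ <;> omega
        · have hprev : t - 1 < n := by omega
          have hadj : (broom n k).Adj i ⟨t-1, hprev⟩ := by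
            rw [broom_adj]; right; right; right; constructor <;> simp <;> omega
          exact hadj.reachable.trans (ih (t-1) (by omega) _ rfl)
  exact ⟨fun u v => (key _ u rfl).trans (key _ v rfl).symm, ⟨⟨0, hn0⟩⟩⟩

def broomL (k : ℕ) (i : ℕ) : ℤ := if i = 0 then 0 else if i ≤ k then (i:ℤ) else pathLabel k (i - k)

lemma broomL_inj (k : ℕ) (hk : 1 ≤ k) : Injective (broomL k) := by
  intro a b h
  simp only [broomL, pathLabel] at h
  split_ifs at h <;> push_cast at h <;> omega

lemma broomL_path (k i : ℕ) (hk : 1 ≤ k) (hi : k ≤ i) : broomL k i = pathLabel k (i - k) := by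
  simp only [broomL, pathLabel]
  split_ifs <;> push_cast <;> omega

lemma broom_image (n k : ℕ) (hk : 2 ≤ k) (hn : k + 1 ≤ n) :
    edgePlus (fun i : Fin n => broomL k i.val) '' (broom n k).edgeSet = Set.Icc (1:ℤ) k := by
  have hk1 : 1 ≤ k := by omega
  ext x
  constructor
  · rintro ⟨e, he, rfl⟩
    induction e using Sym2.ind with
    | _ u v =>
      rw [SimpleGraph.mem_edgeSet, broom_adj] at he
      rw [edgePlus_mk]
      have hsum : ∀ a : ℕ, k ≤ a → broomL k a + broomL k (a+1) ∈ Set.Icc (1:ℤ) k := by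
        intro a ha
        rw [broomL_path k a hk1 ha, broomL_path k (a+1) hk1 (by omega),
          show a + 1 - k = (a - k) + 1 by omega, pathLabel_sum]
        split_ifs <;> constructor <;> omega
      rcases he with ⟨h0, h1, h2⟩ | ⟨h0, h1, h2⟩ | ⟨h1, h2⟩ | ⟨h1, h2⟩
      · simp only [broomL, h0, if_pos, if_neg (by omega : ¬(v.val = 0)), if_pos h2]
        simp; constructor <;> omega
      · simp only [broomL, h0, if_pos, if_neg (by omega : ¬(u.val = 0)), if_pos h2]
        simp; constructor <;> omega
      · have := hsum u.val h1; rw [← h2] at this; exact this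
      · have := hsum v.val h1; rw [← h2] at this; rw [add_comm]; exact this
  · rintro ⟨hx1, hx2⟩
    have hv : x.toNat < n := by omega
    refine ⟨s(⟨0, by omega⟩, ⟨x.toNat, hv⟩), ?_, ?_⟩
    · rw [SimpleGraph.mem_edgeSet, broom_adj]
      left; refine ⟨rfl, ?_, ?_⟩ <;> simp <;> omega
    · rw [edgePlus_mk]
      show broomL k 0 + broomL k x.toNat = x
      simp only [broomL]
      split_ifs <;> first | omega | (exfalso; omega)

lemma broom_sumIndex (n k : ℕ) (hk : 2 ≤ k) (hn : k + 1 ≤ n) : sumIndex (broom n k) = k := by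
  refine sumIndex_eq_of _ k (fun i : Fin n => broomL k i.val) ?_ ?_ ?_
  · exact (broomL_inj k (by omega)).comp Fin.val_injective
  · rw [broom_image n k hk hn, ← Finset.coe_Icc, Set.ncard_coe_finset, Int.card_Icc]
    omega
  · intro g hg
    have hmem : ∀ i ∈ (Finset.univ : Finset (Fin k)),
        g ⟨0, by omega⟩ + g ⟨i.val+1, by omega⟩ ∈ edgePlus g '' (broom n k).edgeSet := by
      intro i _
      refine ⟨s(⟨0, by omega⟩, ⟨i.val+1, by omega⟩), ?_, rfl⟩
      rw [SimpleGraph.mem_edgeSet, broom_adj]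
      left; refine ⟨rfl, by simp, by simp⟩
    have hinj : Set.InjOn (fun i : Fin k => g ⟨0, by omega⟩ + g ⟨i.val+1, by omega⟩)
        (Finset.univ : Finset (Fin k)) := by
      intro a _ b _ h
      simp only [add_right_inj] at h
      have := hg h
      simp only [Fin.mk.injEq] at this
      exact Fin.ext (by omega)
    have := lb_aux (broom n k) g Finset.univ _ hinj hmem
    simpa using this

lemma clique_lb {V : Type*} [Finite V] (G : SimpleGraph V) (g : V → ℤ) (hg : Injective g)
    (s : Finset V) (m d : ℕ) (hm : 3 ≤ m) (hcard : s.card = m)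
    (bad : Finset (Sym2 V)) (hbad : bad.card ≤ d)
    (hadj : ∀ u ∈ s, ∀ v ∈ s, u ≠ v → s(u,v) ∉ bad → G.Adj u v) :
    2 * m - 3 - d ≤ (edgePlus g '' G.edgeSet).ncard := by
  classical
  have hTcard : (s.image g).card = m := by rw [Finset.card_image_of_injective _ hg, hcard]
  set o := (s.image g).orderIsoOfFin hTcard with ho_def
  have ho : ∀ a b : Fin m, a < b → (o a : ℤ) < (o b : ℤ) := fun a b hab => o.strictMono hab
  have ho' : ∀ a b : Fin m, a ≤ b → (o a : ℤ) ≤ (o b : ℤ) := fun a b hab => o.monotone hab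
  have hex : ∀ j : Fin m, ∃ u, u ∈ s ∧ g u = (o j : ℤ) := by
    intro j
    have := (o j).2
    rw [Finset.mem_image] at this
    exact this
  choose e he1 he2 using hex
  obtain ⟨N, hNm⟩ : ∃ N, N = 2*m-3 := ⟨_, rfl⟩
  -- index pair functions, at ℕ level
  have hm1 : m - 1 < m := by omega
  have hlo : ∀ i : ℕ, i < N → (if i < m - 1 then 0 else i + 2 - m) < m := by
    intro i hi; split_ifs <;> omega
  have hhi : ∀ i : ℕ, i < N → (if i < m - 1 then i + 1 else m - 1) < m := by
    intro i hi; split_ifs <;> omega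
  let lo : Fin N → Fin m := fun i => ⟨_, hlo i.val i.isLt⟩
  let hi : Fin N → Fin m := fun i => ⟨_, hhi i.val i.isLt⟩
  have hloval : ∀ i : Fin N, (lo i).val = if i.val < m - 1 then 0 else i.val + 2 - m := fun _ => rfl
  have hhival : ∀ i : Fin N, (hi i).val = if i.val < m - 1 then i.val + 1 else m - 1 := fun _ => rfl
  have hlohi : ∀ i, lo i < hi i := by
    intro i
    have hiN : i.val < N := i.isLt
    rw [Fin.lt_def, hloval, hhival]
    split_ifs <;> omega
  let c : Fin N → ℤ := fun i => (o (lo i) : ℤ) + (o (hi i) : ℤ)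
  have hcval : ∀ i, c i = (o (lo i) : ℤ) + (o (hi i) : ℤ) := fun _ => rfl
  have hcmono : StrictMono c := by
    intro a b hab
    have haN : a.val < N := a.isLt
    have hbN : b.val < N := b.isLt
    have hab' : a.val < b.val := hab
    rw [hcval, hcval]
    by_cases ha : a.val < m - 1 <;> by_cases hb : b.val < m - 1
    · have h1 : lo a = lo b := by apply Fin.ext; rw [hloval, hloval, if_pos ha, if_pos hb]
      have h2 : hi a < hi b := by rw [Fin.lt_def, hhival, hhival, if_pos ha, if_pos hb]; omega
      rw [h1]
      exact add_lt_add_right (ho _ _ h2) _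
    · have h1 : lo a < lo b := by rw [Fin.lt_def, hloval, hloval]; split_ifs <;> omega
      have h2 : hi a ≤ hi b := by rw [Fin.le_def, hhival, hhival]; split_ifs <;> omega
      exact add_lt_add_of_lt_of_le (ho _ _ h1) (ho' _ _ h2)
    · omega
    · have h1 : lo a < lo b := by rw [Fin.lt_def, hloval, hloval]; split_ifs <;> omega
      have h2 : hi a = hi b := by apply Fin.ext; rw [hhival, hhival, if_neg ha, if_neg hb]
      rw [h2]
      exact add_lt_add_left (ho _ _ h1) _
  have hval : ∀ i, c i = g (e (lo i)) + g (e (hi i)) := by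
    intro i; rw [hcval, he2, he2]
  have hne : ∀ i, e (lo i) ≠ e (hi i) := by
    intro i h
    have h2 : (o (lo i) : ℤ) = (o (hi i) : ℤ) := by rw [← he2, ← he2, h]
    exact absurd h2 (ne_of_lt (ho _ _ (hlohi i)))
  let P : Fin N → Sym2 V := fun i => s(e (lo i), e (hi i))
  have hPinj : Injective P := by
    intro a b h
    have h2 : c a = c b := by
      rw [hval, hval, ← edgePlus_mk g, ← edgePlus_mk g]
      exact congrArg (edgePlus g) h
    exact hcmono.injective h2
  let I : Finset (Fin N) := Finset.univ.filter (fun i => P i ∉ bad)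
  let J : Finset (Fin N) := Finset.univ.filter (fun i => P i ∈ bad)
  have hJ : J.card ≤ bad.card := by
    refine Finset.card_le_card_of_injOn P ?_ (hPinj.injOn)
    intro i hi
    exact (Finset.mem_filter.1 hi).2
  have hsub : (Finset.univ : Finset (Fin N)) ⊆ I ∪ J := by
    intro i _
    by_cases h : P i ∈ bad
    · exact Finset.mem_union_right _ (Finset.mem_filter.2 ⟨Finset.mem_univ _, h⟩)
    · exact Finset.mem_union_left _ (Finset.mem_filter.2 ⟨Finset.mem_univ _, h⟩)
  have hNcard : N ≤ I.card + J.card := by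
    calc N = (Finset.univ : Finset (Fin N)).card := by simp
    _ ≤ (I ∪ J).card := Finset.card_le_card hsub
    _ ≤ I.card + J.card := Finset.card_union_le _ _
  have hle := lb_aux G g I c (hcmono.injective.injOn) ?_
  · omega
  · intro i hiI
    refine ⟨P i, ?_, ?_⟩
    · rw [SimpleGraph.mem_edgeSet]
      exact hadj _ (he1 _) _ (he1 _) (hne i) ((Finset.mem_filter.1 hiI).2)
    · rw [show P i = s(e (lo i), e (hi i)) from rfl, edgePlus_mk, hval]

def cpg (n m d : ℕ) : SimpleGraph (Fin n) where
  Adj i j := i ≠ j ∧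
    ((i.val < m ∧ j.val < m ∧ ¬(d = 1 ∧ (i.val = 0 ∧ j.val = 1 ∨ i.val = 1 ∧ j.val = 0)))
      ∨ (m ≤ i.val + 1 ∧ j.val = i.val + 1) ∨ (m ≤ j.val + 1 ∧ i.val = j.val + 1))
  symm := by
    constructor; intro i j ⟨h1, h2⟩
    exact ⟨h1.symm, by tauto⟩
  loopless := by constructor; intro i ⟨h1, _⟩; exact h1 rfl

lemma cpg_adj {n m d : ℕ} {i j : Fin n} : (cpg n m d).Adj i j ↔ i ≠ j ∧
    ((i.val < m ∧ j.val < m ∧ ¬(d = 1 ∧ (i.val = 0 ∧ j.val = 1 ∨ i.val = 1 ∧ j.val = 0)))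
      ∨ (m ≤ i.val + 1 ∧ j.val = i.val + 1) ∨ (m ≤ j.val + 1 ∧ i.val = j.val + 1)) := Iff.rfl

lemma cpg_connected (n m d : ℕ) (hm : 3 ≤ m) (hmn : m ≤ n) : (cpg n m d).Connected := by
  have hh : m - 1 < n := by omega
  rw [connected_iff]
  have key : ∀ t, ∀ i : Fin n, i.val = t → (cpg n m d).Reachable i ⟨m-1, hh⟩ := by
    intro t
    induction t using Nat.strong_induction_on with
    | _ t ih =>
      intro i hi
      by_cases hcase : t < m
      · by_cases heq : i = ⟨m-1, hh⟩
        · rw [heq]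
        · refine SimpleGraph.Adj.reachable ?_
          rw [cpg_adj]
          have hne : i.val ≠ m - 1 := fun hc => heq (Fin.ext (by simp; omega))
          refine ⟨heq, Or.inl ⟨by omega, by show m-1 < m; omega, ?_⟩⟩
          show ¬(d = 1 ∧ (i.val = 0 ∧ m-1 = 1 ∨ i.val = 1 ∧ m-1 = 0))
          omega
      · have hprev : t - 1 < n := by have := i.isLt; omega
        have hadj : (cpg n m d).Adj ⟨t-1, hprev⟩ i := by
          rw [cpg_adj]
          refine ⟨fun hc => ?_, Or.inr (Or.inl ⟨by show m ≤ t-1+1; omega, by show i.val = t-1+1; omega⟩)⟩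
          · have h2 := congrArg Fin.val hc
            have h3 : t - 1 = i.val := h2
            omega
        exact hadj.symm.reachable.trans (ih (t-1) (by omega) _ rfl)
  exact ⟨fun u v => (key _ u rfl).trans (key _ v rfl).symm, ⟨⟨0, by omega⟩⟩⟩

def cpgL (m : ℕ) (i : ℕ) : ℤ := if i < m then (i:ℤ)+1 else pathLabel m (i-(m-1))

lemma cpgL_inj (m : ℕ) (hm : 1 ≤ m) : Injective (cpgL m) := by
  intro a b h
  simp only [cpgL, pathLabel] at h
  split_ifs at h <;> push_cast at h <;> omega

lemma cpgL_path (m i : ℕ) (hm : 1 ≤ m) (hi : m - 1 ≤ i) : cpgL m i = pathLabel m (i - (m-1)) := by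
  simp only [cpgL, pathLabel]
  split_ifs <;> push_cast <;> omega

lemma cpg_image (n m d : ℕ) (hm : 3 + d ≤ m) (hd : d ≤ 1) (hmn : m ≤ n)
    (hpath : m = n ∨ 4 + d ≤ m) :
    edgePlus (fun i : Fin n => cpgL m i.val) '' (cpg n m d).edgeSet = Set.Icc (3+d : ℤ) (2*m-1) := by
  have hm1 : 1 ≤ m := by omega
  ext x
  constructor
  · rintro ⟨e, he, rfl⟩
    induction e using Sym2.ind with
    | _ u v =>
      rw [SimpleGraph.mem_edgeSet, cpg_adj] at he
      rw [edgePlus_mk]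
      obtain ⟨hne, he⟩ := he
      have hnev : u.val ≠ v.val := fun hc => hne (Fin.ext hc)
      have hsum : ∀ a : ℕ, m - 1 ≤ a → a + 1 < n →
          cpgL m a + cpgL m (a+1) ∈ Set.Icc (3+d : ℤ) (2*m-1) := by
        intro a ha han
        have hmlt : 4 + d ≤ m := by rcases hpath with h | h; omega; exact h
        rw [cpgL_path m a hm1 ha, cpgL_path m (a+1) hm1 (by omega),
          show a + 1 - (m-1) = (a - (m-1)) + 1 by omega, pathLabel_sum]
        split_ifs <;> constructor <;> push_cast <;> omega
      rcases he with ⟨h1, h2, h3⟩ | ⟨h1, h2⟩ | ⟨h1, h2⟩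
      · simp only [cpgL, if_pos h1, if_pos h2]
        simp only [Set.mem_Icc]
        constructor <;> push_cast <;> omega
      · have := hsum u.val (by omega) (by rw [← h2]; exact v.isLt)
        rw [← h2] at this; exact this
      · have := hsum v.val (by omega) (by rw [← h2]; exact u.isLt)
        rw [← h2] at this
        rw [add_comm (cpgL m u.val) (cpgL m v.val)]
        exact this
  · rintro ⟨hx1, hx2⟩
    by_cases hsmall : x ≤ m + 1
    · have hv : (x-2).toNat < n := by omega
      refine ⟨s(⟨0, by omega⟩, ⟨(x-2).toNat, hv⟩), ?_, ?_⟩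
      · rw [SimpleGraph.mem_edgeSet, cpg_adj]
        refine ⟨fun hc => ?_, Or.inl ⟨by simp; omega, by simp; omega, ?_⟩⟩
        · have := congrArg Fin.val hc; simp at this; omega
        · simp; intro hd1; omega
      · rw [edgePlus_mk]
        show cpgL m 0 + cpgL m (x-2).toNat = x
        simp only [cpgL]
        split_ifs <;> first | (push_cast; omega) | (exfalso; omega)
    · have hu : (x-m-1).toNat < n := by omega
      refine ⟨s(⟨(x-m-1).toNat, hu⟩, ⟨m-1, by omega⟩), ?_, ?_⟩
      · rw [SimpleGraph.mem_edgeSet, cpg_adj]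
        refine ⟨fun hc => ?_, Or.inl ⟨by simp; omega, by simp; omega, ?_⟩⟩
        · have := congrArg Fin.val hc; simp at this; omega
        · simp; intro hd1; omega
      · rw [edgePlus_mk]
        show cpgL m (x-m-1).toNat + cpgL m (m-1) = x
        simp only [cpgL]
        split_ifs <;> first | (push_cast; omega) | (exfalso; omega)

lemma cpg_sumIndex (n m d : ℕ) (hm : 3 + d ≤ m) (hd : d ≤ 1) (hmn : m ≤ n)
    (hpath : m = n ∨ 4 + d ≤ m) : sumIndex (cpg n m d) = 2*m - 3 - d := by
  classical
  have hm1 : 1 ≤ m := by omega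
  refine sumIndex_eq_of _ _ (fun i : Fin n => cpgL m i.val) ?_ ?_ ?_
  · exact (cpgL_inj m hm1).comp Fin.val_injective
  · rw [cpg_image n m d hm hd hmn hpath, ← Finset.coe_Icc, Set.ncard_coe_finset, Int.card_Icc]
    omega
  · intro g hg
    set s : Finset (Fin n) := Finset.univ.image (Fin.castLE hmn) with hs_def
    have hscard : s.card = m := by
      rw [hs_def, Finset.card_image_of_injective _ (Fin.castLE_injective hmn)]
      simp
    have hsmem : ∀ u : Fin n, u ∈ s ↔ u.val < m := by
      intro u
      rw [hs_def]
      simp only [Finset.mem_image, Finset.mem_univ, true_and]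
      constructor
      · rintro ⟨j, rfl⟩; exact j.isLt
      · intro h; exact ⟨⟨u.val, h⟩, Fin.ext rfl⟩
    set bad : Finset (Sym2 (Fin n)) :=
      if d = 1 then {s((⟨0, by omega⟩ : Fin n), (⟨1, by omega⟩ : Fin n))} else ∅ with hbad_def
    have hbadcard : bad.card ≤ d := by
      rw [hbad_def]; split_ifs with h <;> simp <;> omega
    have hadj : ∀ u ∈ s, ∀ v ∈ s, u ≠ v → s(u,v) ∉ bad → (cpg n m d).Adj u v := by
      intro u hu v hv huv hb
      rw [cpg_adj]
      refine ⟨huv, Or.inl ⟨(hsmem u).1 hu, (hsmem v).1 hv, ?_⟩⟩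
      rintro ⟨hd1, hvals⟩
      apply hb
      rw [hbad_def, if_pos hd1, Finset.mem_singleton]
      rcases hvals with ⟨h0, h1⟩ | ⟨h0, h1⟩
      · rw [Sym2.eq_iff]; left; exact ⟨Fin.ext h0, Fin.ext h1⟩
      · rw [Sym2.eq_iff]; right; exact ⟨Fin.ext h0, Fin.ext h1⟩
    have := clique_lb (cpg n m d) g hg s m d (by omega) hscard bad hbadcard hadj
    exact this

theorem stmt11 (n k : ℕ) (hk : 2 ≤ k) (hkn : k ≤ 2 * n - 3) :
    ∃ G : SimpleGraph (Fin n), G.Connected ∧ sumIndex G = k := by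
  have hn3 : 3 ≤ n := by omega
  by_cases hA : k + 1 ≤ n
  · exact ⟨broom n k, broom_connected n k (by omega) hA, broom_sumIndex n k hk hA⟩
  · have hkn' : n ≤ k := by omega
    rcases Nat.even_or_odd k with he | ho
    · obtain ⟨t, ht⟩ := he
      refine ⟨cpg n ((k+4)/2) 1, cpg_connected n ((k+4)/2) 1 (by omega) (by omega), ?_⟩
      rw [cpg_sumIndex n ((k+4)/2) 1 (by omega) (by omega) (by omega) (by omega)]
      omega
    · obtain ⟨t, ht⟩ := ho
      refine ⟨cpg n ((k+3)/2) 0, cpg_connected n ((k+3)/2) 0 (by omega) (by omega), ?_⟩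
      rw [cpg_sumIndex n ((k+3)/2) 0 (by omega) (by omega) (by omega) (by omega)]
      omega
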